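/- Let Σ ⊆ ℂ be compact. Then z ∈ Q(Σ) if and only if there exist λ₁, λ₂, λ₃ ∈ Σ and s, t ∈ [0,1] such that Re z = t·Re λ₁ + (1−t)s·Re λ₂ + (1−t)(1−s)·Re λ₃ and (Im z)² = st(1−t)(Re λ₁ − Re λ₂)² + t(1−t)(1−s)(Re λ₁ − Re λ₃)² + (1−t)²s(1−s)(Re λ₂ − Re λ₃)² + t(Im λ₁)² + (1−t)s(Im λ₂)² + (1−t)(1−s)(Im λ₃)². -/

import Mathlib

open scoped ComplexConjugate
open Complex

noncomputable section

/-- `Σ_z := {(λ − z)(conj λ − z) : λ ∈ Σ}`. -/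
def sigmaSet (S : Set ℂ) (z : ℂ) : Set ℂ := (fun l => (l - z) * ((conj l) - z)) '' S

/-- `Q(Σ) := {z : 0 ∈ closed convex hull of Σ_z}`. -/
def QSet (S : Set ℂ) : Set ℂ := {z | (0 : ℂ) ∈ closure (convexHull ℝ (sigmaSet S z))}

private lemma exists_triple_of_mem_convexHull' {A : Set ℂ} {x : ℂ} (hx : x ∈ convexHull ℝ A) :
    ∃ y₁ ∈ A, ∃ y₂ ∈ A, ∃ y₃ ∈ A, ∃ c₁ c₂ c₃ : ℝ,
      0 ≤ c₁ ∧ 0 ≤ c₂ ∧ 0 ≤ c₃ ∧ c₁ + c₂ + c₃ = 1 ∧ c₁ • y₁ + c₂ • y₂ + c₃ • y₃ = x := by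
  obtain ⟨ι, hι, zf, w, hr, hai, hpos, hsum, hcomb⟩ := eq_pos_convex_span_of_mem_convexHull hx
  letI := hι
  have hcard : Fintype.card ι ≤ 3 := by
    have h1 := hai.card_le_finrank_succ
    have h2 : Module.finrank ℝ ↥(vectorSpan ℝ (Set.range zf)) ≤ Module.finrank ℝ ℂ :=
      Submodule.finrank_le _
    have h3 : Module.finrank ℝ ℂ = 2 := Complex.finrank_real_complex
    omega
  have hne : Fintype.card ι ≠ 0 := by
    intro h
    haveI := Fintype.card_eq_zero_iff.mp h
    rw [Finset.univ_eq_empty, Finset.sum_empty] at hsum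
    norm_num at hsum
  have hmem : ∀ i, zf i ∈ A := fun i => hr ⟨i, rfl⟩
  have hn : Fintype.card ι = 1 ∨ Fintype.card ι = 2 ∨ Fintype.card ι = 3 := by omega
  rcases hn with hn | hn | hn
  · let e := (Fintype.equivFin ι).trans (finCongr hn)
    have hs := (Equiv.sum_comp e.symm w).trans hsum
    have hc := (Equiv.sum_comp e.symm (fun i => w i • zf i)).trans hcomb
    rw [Fin.sum_univ_one] at hs hc
    exact ⟨zf (e.symm 0), hmem _, zf (e.symm 0), hmem _, zf (e.symm 0), hmem _,
      w (e.symm 0), 0, 0, (hpos _).le, le_refl _, le_refl _, by linarith, by simpa using hc⟩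
  · let e := (Fintype.equivFin ι).trans (finCongr hn)
    have hs := (Equiv.sum_comp e.symm w).trans hsum
    have hc := (Equiv.sum_comp e.symm (fun i => w i • zf i)).trans hcomb
    rw [Fin.sum_univ_two] at hs hc
    exact ⟨zf (e.symm 0), hmem _, zf (e.symm 1), hmem _, zf (e.symm 0), hmem _,
      w (e.symm 0), w (e.symm 1), 0, (hpos _).le, (hpos _).le, le_refl _, by linarith, by
        simpa using hc⟩
  · let e := (Fintype.equivFin ι).trans (finCongr hn)
    have hs := (Equiv.sum_comp e.symm w).trans hsum
    have hc := (Equiv.sum_comp e.symm (fun i => w i • zf i)).trans hcomb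
    rw [Fin.sum_univ_three] at hs hc
    exact ⟨zf (e.symm 0), hmem _, zf (e.symm 1), hmem _, zf (e.symm 2), hmem _,
      w (e.symm 0), w (e.symm 1), w (e.symm 2), (hpos _).le, (hpos _).le, (hpos _).le, hs, hc⟩

private lemma triple_mem_convexHull' {A : Set ℂ} {y₁ y₂ y₃ : ℂ} (h₁ : y₁ ∈ A) (h₂ : y₂ ∈ A)
    (h₃ : y₃ ∈ A) {c₁ c₂ c₃ : ℝ} (hc₁ : 0 ≤ c₁) (hc₂ : 0 ≤ c₂) (hc₃ : 0 ≤ c₃)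
    (hsum : c₁ + c₂ + c₃ = 1) :
    c₁ • y₁ + c₂ • y₂ + c₃ • y₃ ∈ convexHull ℝ A := by
  have hs : ∑ i : Fin 3, (![c₁, c₂, c₃]) i = 1 := by simp [Fin.sum_univ_three, hsum]
  have := Finset.centerMass_mem_convexHull (Finset.univ : Finset (Fin 3))
    (w := ![c₁, c₂, c₃]) (z := ![y₁, y₂, y₃])
    (fun i _ => by fin_cases i <;> assumption)
    (by rw [hs]; norm_num)
    (fun i _ => by fin_cases i <;> assumption)
  rwa [Finset.centerMass_eq_of_sum_1 _ _ hs, Fin.sum_univ_three] at this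

private lemma mem_closure_convexHull_iff' {A : Set ℂ} (hA : IsCompact A) (x : ℂ) :
    x ∈ closure (convexHull ℝ A) ↔ ∃ y₁ ∈ A, ∃ y₂ ∈ A, ∃ y₃ ∈ A, ∃ c₁ c₂ c₃ : ℝ,
      0 ≤ c₁ ∧ 0 ≤ c₂ ∧ 0 ≤ c₃ ∧ c₁ + c₂ + c₃ = 1 ∧ c₁ • y₁ + c₂ • y₂ + c₃ • y₃ = x := by
  set f : (Fin 3 → ℝ) × (ℂ × ℂ × ℂ) → ℂ :=
    fun p => p.1 0 • p.2.1 + p.1 1 • p.2.2.1 + p.1 2 • p.2.2.2 with hf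
  have hfc : Continuous f := by fun_prop
  set D : Set ((Fin 3 → ℝ) × (ℂ × ℂ × ℂ)) := stdSimplex ℝ (Fin 3) ×ˢ (A ×ˢ A ×ˢ A) with hD
  have hDc : IsCompact D := (show IsCompact (stdSimplex ℝ (Fin 3)) by apply isCompact_stdSimplex).prod (hA.prod (hA.prod hA))
  have hTc : IsClosed (f '' D) := (hDc.image hfc).isClosed
  have hmem : ∀ u : ℂ, u ∈ f '' D ↔ (∃ y₁ ∈ A, ∃ y₂ ∈ A, ∃ y₃ ∈ A, ∃ c₁ c₂ c₃ : ℝ,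
      0 ≤ c₁ ∧ 0 ≤ c₂ ∧ 0 ≤ c₃ ∧ c₁ + c₂ + c₃ = 1 ∧ c₁ • y₁ + c₂ • y₂ + c₃ • y₃ = u) := by
    intro u
    constructor
    · rintro ⟨⟨w, y₁, y₂, y₃⟩, ⟨⟨hw0, hw1⟩, hy₁, hy₂, hy₃⟩, rfl⟩
      rw [Fin.sum_univ_three] at hw1
      exact ⟨y₁, hy₁, y₂, hy₂, y₃, hy₃, w 0, w 1, w 2, hw0 0, hw0 1, hw0 2, hw1, rfl⟩
    · rintro ⟨y₁, hy₁, y₂, hy₂, y₃, hy₃, c₁, c₂, c₃, hc₁, hc₂, hc₃, hsum, rfl⟩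
      refine ⟨⟨![c₁, c₂, c₃], y₁, y₂, y₃⟩, ⟨⟨fun i => by fin_cases i <;> assumption, ?_⟩,
        hy₁, hy₂, hy₃⟩, by simp [hf]⟩
      simp [Fin.sum_univ_three, hsum]
  rw [← hmem]
  constructor
  · intro hx
    have hsub : convexHull ℝ A ⊆ f '' D := by
      intro u hu
      rw [hmem]
      exact exists_triple_of_mem_convexHull' hu
    exact hTc.closure_eq ▸ (closure_mono hsub) hx
  · intro hx
    rw [hmem] at hx
    obtain ⟨y₁, hy₁, y₂, hy₂, y₃, hy₃, c₁, c₂, c₃, hc₁, hc₂, hc₃, hsum, rfl⟩ := hx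
    exact subset_closure (triple_mem_convexHull' hy₁ hy₂ hy₃ hc₁ hc₂ hc₃ hsum)

set_option maxHeartbeats 1000000 in
/-- Parametric form of Theorem 2.2: `z ∈ Q(Σ)` iff there are `λ₁, λ₂, λ₃ ∈ Σ` and
`s, t ∈ [0,1]` realising the stated formulas for `Re z` and `(Im z)²`. -/
theorem stmt3 (S : Set ℂ) (hS : IsCompact S) (z : ℂ) :
    z ∈ QSet S ↔
      ∃ l₁ ∈ S, ∃ l₂ ∈ S, ∃ l₃ ∈ S, ∃ s ∈ Set.Icc (0:ℝ) 1, ∃ t ∈ Set.Icc (0:ℝ) 1,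
        z.re = t * l₁.re + (1 - t) * s * l₂.re + (1 - t) * (1 - s) * l₃.re ∧
        z.im ^ 2 =
          s * t * (1 - t) * (l₁.re - l₂.re) ^ 2 + t * (1 - t) * (1 - s) * (l₁.re - l₃.re) ^ 2 +
          (1 - t) ^ 2 * s * (1 - s) * (l₂.re - l₃.re) ^ 2 + t * l₁.im ^ 2 +
          (1 - t) * s * l₂.im ^ 2 + (1 - t) * (1 - s) * l₃.im ^ 2 := by
  have hcomp : IsCompact (sigmaSet S z) := hS.image ((continuous_id.sub continuous_const).mul (Complex.continuous_conj.sub continuous_const))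
  have hQ : z ∈ QSet S ↔ (0 : ℂ) ∈ closure (convexHull ℝ (sigmaSet S z)) := Iff.rfl
  rw [hQ, mem_closure_convexHull_iff' hcomp]
  constructor
  · rintro ⟨y₁, hy₁, y₂, hy₂, y₃, hy₃, c₁, c₂, c₃, hc₁, hc₂, hc₃, hsum, hcomb⟩
    obtain ⟨l₁, hl₁, rfl⟩ := hy₁
    obtain ⟨l₂, hl₂, rfl⟩ := hy₂
    obtain ⟨l₃, hl₃, rfl⟩ := hy₃
    have hre := congrArg Complex.re hcomb
    have him := congrArg Complex.im hcomb
    simp only [Complex.add_re, Complex.add_im, Complex.smul_re, Complex.smul_im,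
      Complex.mul_re, Complex.mul_im, Complex.sub_re, Complex.sub_im, Complex.conj_re,
      Complex.conj_im, Complex.zero_re, Complex.zero_im, smul_eq_mul] at hre him
    have E1 : c₁ * ((l₁.re - z.re)^2 + l₁.im^2 - z.im^2)
        + c₂ * ((l₂.re - z.re)^2 + l₂.im^2 - z.im^2)
        + c₃ * ((l₃.re - z.re)^2 + l₃.im^2 - z.im^2) = 0 := by linear_combination hre
    have E2 : z.im * (c₁ * (l₁.re - z.re) + c₂ * (l₂.re - z.re) + c₃ * (l₃.re - z.re)) = 0 := by
      linear_combination (-1/2 : ℝ) * him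
    have hq : c₁ * (l₁.re - z.re) + c₂ * (l₂.re - z.re) + c₃ * (l₃.re - z.re) = 0 := by
      rcases eq_or_ne z.im 0 with hy | hy
      · rw [hy] at E1
        have E1' : c₁ * (l₁.re - z.re)^2 + c₂ * (l₂.re - z.re)^2 + c₃ * (l₃.re - z.re)^2
            + c₁ * l₁.im^2 + c₂ * l₂.im^2 + c₃ * l₃.im^2 = 0 := by linear_combination E1
        have n1 := mul_nonneg hc₁ (sq_nonneg (l₁.re - z.re))
        have n2 := mul_nonneg hc₂ (sq_nonneg (l₂.re - z.re))
        have n3 := mul_nonneg hc₃ (sq_nonneg (l₃.re - z.re))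
        have n4 := mul_nonneg hc₁ (sq_nonneg l₁.im)
        have n5 := mul_nonneg hc₂ (sq_nonneg l₂.im)
        have n6 := mul_nonneg hc₃ (sq_nonneg l₃.im)
        have h1 : c₁ * (l₁.re - z.re)^2 = 0 := le_antisymm (by linarith) n1
        have h2 : c₂ * (l₂.re - z.re)^2 = 0 := le_antisymm (by linarith) n2
        have h3 : c₃ * (l₃.re - z.re)^2 = 0 := le_antisymm (by linarith) n3
        have k1 : c₁ * (l₁.re - z.re) = 0 := by
          rcases mul_eq_zero.1 h1 with h | h
          · rw [h, zero_mul]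
          · rw [pow_eq_zero_iff (two_ne_zero)] at h
            rw [h, mul_zero]
        have k2 : c₂ * (l₂.re - z.re) = 0 := by
          rcases mul_eq_zero.1 h2 with h | h
          · rw [h, zero_mul]
          · rw [pow_eq_zero_iff (two_ne_zero)] at h
            rw [h, mul_zero]
        have k3 : c₃ * (l₃.re - z.re) = 0 := by
          rcases mul_eq_zero.1 h3 with h | h
          · rw [h, zero_mul]
          · rw [pow_eq_zero_iff (two_ne_zero)] at h
            rw [h, mul_zero]
        linarith
      · exact (mul_eq_zero.1 E2).resolve_left hy
    have hx : z.re = c₁ * l₁.re + c₂ * l₂.re + c₃ * l₃.re := by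
      linear_combination -hq - z.re * hsum
    have hE : z.im^2 = c₁ * (l₁.re - z.re)^2 + c₂ * (l₂.re - z.re)^2 + c₃ * (l₃.re - z.re)^2
        + c₁ * l₁.im^2 + c₂ * l₂.im^2 + c₃ * l₃.im^2 := by
      linear_combination -E1 - z.im^2 * hsum
    set t := c₁ with hts
    set s : ℝ := if c₂ + c₃ = 0 then 0 else c₂ / (c₂ + c₃) with hss
    have h23 : 0 ≤ c₂ + c₃ := by linarith
    have hs01 : s ∈ Set.Icc (0:ℝ) 1 := by
      rw [hss]
      split_ifs with h
      · exact ⟨le_refl _, zero_le_one⟩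
      · exact ⟨div_nonneg hc₂ h23, div_le_one_of_le₀ (by linarith) h23⟩
    have h1t : 1 - t = c₂ + c₃ := by rw [hts]; linarith
    have h2 : (1 - t) * s = c₂ := by
      rw [h1t, hss]
      split_ifs with h
      · have : c₂ = 0 := by linarith [hc₂, hc₃, h]
        rw [this, mul_zero]
      · field_simp
    have h3 : (1 - t) * (1 - s) = c₃ := by
      rw [h1t, hss]
      split_ifs with h
      · have h2' : c₂ = 0 := by linarith
        have h3' : c₃ = 0 := by linarith
        rw [h2', h3']; ring
      · field_simp
        ring
    refine ⟨l₁, hl₁, l₂, hl₂, l₃, hl₃, s, hs01, t, ⟨hc₁, by linarith⟩, ?_, ?_⟩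
    · rw [h2, h3]
      exact hx
    · have hx' : z.re = t * l₁.re + (1 - t) * s * l₂.re + (1 - t) * (1 - s) * l₃.re := by
        rw [h2, h3]; exact hx
      have hE' : z.im^2 = t * (l₁.re - z.re)^2 + (1 - t) * s * (l₂.re - z.re)^2
          + (1 - t) * (1 - s) * (l₃.re - z.re)^2
          + t * l₁.im^2 + (1 - t) * s * l₂.im^2 + (1 - t) * (1 - s) * l₃.im^2 := by
        rw [h2, h3]; exact hE
      linear_combination hE' + (z.re - (t * l₁.re + (1 - t) * s * l₂.re
        + (1 - t) * (1 - s) * l₃.re)) * hx'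
  · rintro ⟨l₁, hl₁, l₂, hl₂, l₃, hl₃, s, ⟨hs0, hs1⟩, t, ⟨ht0, ht1⟩, hre, him2⟩
    refine ⟨(l₁ - z) * (conj l₁ - z), ⟨l₁, hl₁, rfl⟩, (l₂ - z) * (conj l₂ - z), ⟨l₂, hl₂, rfl⟩,
      (l₃ - z) * (conj l₃ - z), ⟨l₃, hl₃, rfl⟩, t, (1 - t) * s, (1 - t) * (1 - s),
      ht0, mul_nonneg (by linarith) hs0, mul_nonneg (by linarith) (by linarith), by ring, ?_⟩
    apply Complex.ext
    · simp only [Complex.add_re, Complex.smul_re, Complex.mul_re, Complex.sub_re,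
        Complex.sub_im, Complex.conj_re, Complex.conj_im, Complex.zero_re, smul_eq_mul]
      linear_combination (z.re - (t * l₁.re + (1 - t) * s * l₂.re
        + (1 - t) * (1 - s) * l₃.re)) * hre - him2
    · simp only [Complex.add_im, Complex.smul_im, Complex.mul_im, Complex.sub_re,
        Complex.sub_im, Complex.conj_re, Complex.conj_im, Complex.zero_im, smul_eq_mul]
      linear_combination (2 * z.im) * hre

end
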